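/- Suppose c : [κ]² → θ is a colouring of a regular uncountable cardinal κ such that for every B ∈ [κ]^κ, c''[B]² = θ (i.e., c witnesses κ ↛ [κ]²_θ). Then for every B ∈ [κ]^κ there exists ε < κ such that for all β ∈ B \ ε and all τ < min{ε, θ}, there exists η ∈ B ∩ ε with c(η,β) = τ. -/

import Mathlib

open Cardinal Ordinal Set

/-- The "greedy" maximal τ-free subset of `B`: β is good iff β ∈ B and no earlier
good η gives colour τ with β. -/
def stmt4Good (c : Ordinal.{0} → Ordinal.{0} → Ordinal.{0}) (B : Set Ordinal.{0})
    (τ : Ordinal.{0}) (β : Ordinal.{0}) : Prop :=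
  β ∈ B ∧ ∀ η, η < β → stmt4Good c B τ η → c η β ≠ τ
termination_by β
decreasing_by exact ‹_›

theorem stmt4Good_iff (c : Ordinal.{0} → Ordinal.{0} → Ordinal.{0}) (B : Set Ordinal.{0})
    (τ β : Ordinal.{0}) :
    stmt4Good c B τ β ↔ β ∈ B ∧ ∀ η, η < β → stmt4Good c B τ η → c η β ≠ τ := by
  rw [stmt4Good]

/-- For each single colour τ < θ there is a bound ε below which τ is always realized
with any β ∈ B past ε. -/
theorem stmt4_single (κ θ : Cardinal.{0}) (hκreg : κ.IsRegular) (hκunc : ℵ₀ < κ)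
    (c : Ordinal.{0} → Ordinal.{0} → Ordinal.{0})
    (hwit : ∀ B : Set Ordinal, B ⊆ Set.Iio κ.ord →
      Cardinal.mk ↥B = Cardinal.lift.{1} κ →
      ∀ τ < θ.ord, ∃ η ∈ B, ∃ β ∈ B, η < β ∧ c η β = τ)
    (B : Set Ordinal) (hB : B ⊆ Set.Iio κ.ord)
    (hBκ : Cardinal.mk ↥B = Cardinal.lift.{1} κ)
    (τ : Ordinal) (hτ : τ < θ.ord) :
    ∃ ε < κ.ord, ∀ β ∈ B, ε ≤ β → ∃ η ∈ B, η < ε ∧ c η β = τ := by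
  set S : Set Ordinal := {β | stmt4Good c B τ β} with hS
  have hSB : S ⊆ B := fun β hβ => ((stmt4Good_iff c B τ β).1 hβ).1
  have hSIio : S ⊆ Set.Iio κ.ord := hSB.trans hB
  -- S cannot have full size κ
  have hSne : Cardinal.mk ↥S ≠ Cardinal.lift.{1} κ := by
    intro h
    obtain ⟨η, hη, β, hβ, hlt, hc⟩ := hwit S hSIio h τ hτ
    exact ((stmt4Good_iff c B τ β).1 hβ).2 η hlt hη hc
  have hSlt : Cardinal.mk ↥S < Cardinal.lift.{1} κ :=
    lt_of_le_of_ne (hBκ ▸ Cardinal.mk_le_mk_of_subset hSB) hSne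
  -- S is small, take a Type-0 indexing
  have hsmall : Small.{0} ↥S := by
    rw [← Ordinal.bddAbove_iff_small]
    exact ⟨κ.ord, fun β hβ => (hSIio hβ).le⟩
  have hcard : Cardinal.mk (Shrink.{0} ↥S) < κ := by
    have h2 := Cardinal.lift_mk_shrink''.{1, 0} ↥S
    refine Cardinal.lift_lt.{0,1}.1 ?_
    rw [h2]
    exact hSlt
  set e := (equivShrink ↥S).symm
  set f : Shrink.{0} ↥S → Ordinal := fun i => ((e i : ↥S) : Ordinal) + 1 with hf
  have hflt : ∀ i, f i < κ.ord := fun i =>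
    (Cardinal.isSuccLimit_ord hκreg.aleph0_le).succ_lt (hSIio (e i).2)
  have hι : Cardinal.mk (Shrink.{0} ↥S) < κ.ord.cof := by rwa [hκreg.cof_eq]
  refine ⟨iSup f, Ordinal.iSup_lt_ord hι hflt, ?_⟩
  intro β hβ hεβ
  have hβS : β ∉ S := by
    intro hβS
    have : f (equivShrink ↥S ⟨β, hβS⟩) ≤ iSup f := Ordinal.le_iSup f _
    rw [hf] at this
    simp only [e, Equiv.symm_apply_apply] at this
    exact absurd (this.trans hεβ) (by simp [Order.add_one_le_iff])
  rw [hS, Set.mem_setOf_eq, stmt4Good_iff] at hβS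
  push_neg at hβS
  obtain ⟨η, hηβ, hηS, hc⟩ := hβS hβ
  refine ⟨η, hSB hηS, ?_, hc⟩
  have : f (equivShrink ↥S ⟨η, hηS⟩) ≤ iSup f := Ordinal.le_iSup f _
  rw [hf] at this
  simp only [e, Equiv.symm_apply_apply] at this
  exact lt_of_lt_of_le (lt_of_lt_of_le (lt_add_one η) this) le_rfl

theorem stmt_4 (κ θ : Cardinal.{0}) (hκreg : κ.IsRegular) (hκunc : ℵ₀ < κ)
    (c : Ordinal.{0} → Ordinal.{0} → Ordinal.{0})
    (hcθ : ∀ α β : Ordinal, α < β → β < κ.ord → c α β < θ.ord)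
    (hwit : ∀ B : Set Ordinal, B ⊆ Set.Iio κ.ord →
      Cardinal.mk ↥B = Cardinal.lift.{1} κ →
      ∀ τ < θ.ord, ∃ η ∈ B, ∃ β ∈ B, η < β ∧ c η β = τ)
    (B : Set Ordinal) (hB : B ⊆ Set.Iio κ.ord)
    (hBκ : Cardinal.mk ↥B = Cardinal.lift.{1} κ) :
    ∃ ε < κ.ord, ∀ β ∈ B, ε ≤ β → ∀ τ : Ordinal, τ < ε → τ < θ.ord →
      ∃ η ∈ B, η < ε ∧ c η β = τ := by
  have hsingle := stmt4_single κ θ hκreg hκunc c hwit B hB hBκ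
  -- choose ε(τ) for each τ < θ.ord
  classical
  set g : Ordinal → Ordinal := fun τ =>
    if h : τ < θ.ord then (hsingle τ h).choose else 0 with hg
  have hglt : ∀ τ, g τ < κ.ord := by
    intro τ
    by_cases h : τ < θ.ord
    · simp only [hg, dif_pos h]
      exact (hsingle τ h).choose_spec.1
    · simp only [hg, dif_neg h]
      exact hκreg.ord_pos
  have hgspec : ∀ τ, τ < θ.ord → ∀ β ∈ B, g τ ≤ β → ∃ η ∈ B, η < g τ ∧ c η β = τ := by
    intro τ hτ
    rw [hg]
    simp only [hτ, dif_pos]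
    exact (hsingle τ hτ).choose_spec.2
  -- closure under g via an ω-iteration
  let F : Ordinal → Ordinal := fun x =>
    x ⊔ iSup (fun i : x.ToType => g ((Ordinal.ToType.mk (o := x)).symm i))
  have hF : ∀ x < κ.ord, F x < κ.ord := by
    intro x hx
    apply sup_lt_iff.2 ⟨hx, ?_⟩
    apply Ordinal.iSup_lt_ord _ (fun i => hglt _)
    rw [Cardinal.mk_toType, hκreg.cof_eq]
    exact (Cardinal.lt_ord).1 hx
  have hFle : ∀ x, x ≤ F x := fun x => le_sup_left
  have hgF : ∀ x, ∀ τ < x, g τ ≤ F x := by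
    intro x τ hτ
    refine le_trans ?_ le_sup_right
    have : g τ = g ((Ordinal.ToType.mk (o := x)).symm ((Ordinal.ToType.mk (o := x)) ⟨τ, hτ⟩)) := by
      rw [OrderIso.symm_apply_apply]
    rw [this]
    exact Ordinal.le_iSup _ _
  let e : ℕ → Ordinal := fun n => F^[n] 0
  have he : ∀ n, e n < κ.ord := by
    intro n
    induction n with
    | zero => exact hκreg.ord_pos
    | succ n ih =>
      show F^[n + 1] 0 < κ.ord
      rw [Function.iterate_succ_apply']
      exact hF _ ih
  have hesucc : ∀ n, e (n + 1) = F (e n) := fun n => Function.iterate_succ_apply' F n 0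
  set ε := iSup e with hε
  have hεlt : ε < κ.ord := by
    apply Ordinal.iSup_lt_ord _ he
    rw [hκreg.cof_eq, Cardinal.mk_nat]
    exact hκunc
  refine ⟨ε, hεlt, ?_⟩
  intro β hβ hεβ τ hτε hτθ
  obtain ⟨n, hn⟩ := Ordinal.lt_iSup_iff.1 (hε ▸ hτε)
  have hgτ : g τ ≤ ε := by
    calc g τ ≤ F (e n) := hgF (e n) τ hn
    _ = e (n + 1) := (hesucc n).symm
    _ ≤ ε := Ordinal.le_iSup e (n + 1)
  obtain ⟨η, hη, hηg, hc⟩ := hgspec τ hτθ β hβ (hgτ.trans hεβ)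
  exact ⟨η, hη, hηg.trans_le hgτ, hc⟩
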